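/- (Case 4a of the SP-WENO case analysis.) Assume Δz_{i+1/2} ≠ 0, θ_{i+1}^- = 1, and θ_i^+ > 1, and that the weights are consistent (-3/8 ≤ C_1, C_2 ≤ 1/8). Then the sign-property constraint w̃_0(1 - θ_{i+1}^-) + w_1(1 - θ_i^+) ≥ 0 holds if and only if C_1 = 1/8 (equivalently w_1 = 0); in particular C_2 is unconstrained beyond consistency. -/
import Mathlib

/-- Case 4a of the SP-WENO case analysis: if `Δz_{i+1/2} ≠ 0`,
`θ⁻_{i+1} = 1`, `θ⁺_i > 1` and the weights are consistent
(`-3/8 ≤ C₁, C₂ ≤ 1/8`), then the sign-property constraint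
`w̃₀(1 - θ⁻_{i+1}) + w₁(1 - θ⁺_i) ≥ 0` holds iff `C₁ = 1/8`
(equivalently `w₁ = 0`); `C₂` is unconstrained beyond consistency. -/
theorem sp_weno_case4a (zm z0 z1 z2 C1 C2 : ℝ) (hΔ : z1 - z0 ≠ 0)
    (hθm : (z2 - z1)/(z1 - z0) = 1) (hθp : (z0 - zm)/(z1 - z0) > 1)
    (hC1l : -(3/8) ≤ C1) (hC1u : C1 ≤ 1/8)
    (hC2l : -(3/8) ≤ C2) (hC2u : C2 ≤ 1/8) :
    (1/4 - 2*C2)*(1 - (z2 - z1)/(z1 - z0))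
        + (1/4 - 2*C1)*(1 - (z0 - zm)/(z1 - z0)) ≥ 0 ↔ C1 = 1/8 := by
  rw [hθm]
  constructor
  · intro h
    have hneg : 1 - (z0 - zm)/(z1 - z0) < 0 := by linarith
    have hw : 1/4 - 2*C1 ≥ 0 := by linarith
    by_contra hne
    have hw' : 1/4 - 2*C1 > 0 := lt_of_le_of_ne hw (by intro he; apply hne; linarith)
    nlinarith
  · intro h
    rw [h]
    ring_nf
    linarith
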